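/- Let a, b, c be integers. If the circulant matrix M₁ with rows (a,c,b),(b,a,c),(c,b,a) is nonsingular, then the lattice graph 𝒢(M₁) is linearly symmetric; similarly, if the matrix M₁′ with rows (a,b,c),(a,c,−b−c),(a,−b−c,b) is nonsingular, then the lattice graph 𝒢(M₁′) is linearly symmetric. -/

import Mathlib

open Matrix

/-- The subgroup (submodule) `Mℤⁿ` generated by the columns of `M`. -/
def colSpan {ι : Type*} [Fintype ι] [DecidableEq ι] (M : Matrix ι ι ℤ) :
    Submodule ℤ (ι → ℤ) :=
  LinearMap.range M.mulVecLin

/-- The vertex set `ℤⁿ/Mℤⁿ` of the lattice graph. -/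
abbrev LatticeVertex {ι : Type*} [Fintype ι] [DecidableEq ι] (M : Matrix ι ι ℤ) :=
  (ι → ℤ) ⧸ colSpan M

/-- The `i`-th standard basis vector of `ℤⁿ`. -/
def stdBasis {ι : Type*} [DecidableEq ι] (i : ι) : ι → ℤ := Pi.single i 1

/-- The lattice graph `𝒢(M)`. -/
def latticeGraph {ι : Type*} [Fintype ι] [DecidableEq ι] (M : Matrix ι ι ℤ) :
    SimpleGraph (LatticeVertex M) where
  Adj v w := v ≠ w ∧ ∃ i : ι,
      v - w = Submodule.Quotient.mk (stdBasis i) ∨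
      w - v = Submodule.Quotient.mk (stdBasis i)
  symm := ⟨by rintro v w ⟨hne, i, h⟩; exact ⟨hne.symm, i, h.symm⟩⟩
  loopless := ⟨fun v h => h.1 rfl⟩

/-- The subgraph of `𝒢(M)` spanned by the directions in `S`. -/
def spannedSubgraph {ι : Type*} [Fintype ι] [DecidableEq ι] (M : Matrix ι ι ℤ) (S : Set ι) :
    SimpleGraph (AddSubgroup.closure
      ((fun i => (Submodule.Quotient.mk (stdBasis i) : LatticeVertex M)) '' S)) where
  Adj v w := v ≠ w ∧ ∃ i ∈ S,
      (v : LatticeVertex M) - (w : LatticeVertex M) = Submodule.Quotient.mk (stdBasis i) ∨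
      (w : LatticeVertex M) - (v : LatticeVertex M) = Submodule.Quotient.mk (stdBasis i)
  symm := ⟨by rintro v w ⟨hne, i, hiS, h⟩; exact ⟨hne.symm, i, hiS, h.symm⟩⟩
  loopless := ⟨fun v h => h.1 rfl⟩

/-- The projection of `𝒢(M)` over `e_j`: the subgraph spanned by all other directions. -/
def projGraph {ι : Type*} [Fintype ι] [DecidableEq ι] (M : Matrix ι ι ℤ) (j : ι) :=
  spannedSubgraph M {i | i ≠ j}

/-- The torus graph `T(a₁,…,aₙ)`. -/
def torusGraph {n : ℕ} (a : Fin n → ℕ) : SimpleGraph (∀ i, ZMod (a i)) where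
  Adj x y := x ≠ y ∧ ∃ i, (∀ j, j ≠ i → x j = y j) ∧ (x i = y i + 1 ∨ y i = x i + 1)
  symm := by
    constructor
    rintro x y ⟨hne, i, hj, h⟩
    exact ⟨hne.symm, i, fun j hji => (hj j hji).symm, h.symm⟩
  loopless := ⟨fun x h => h.1 rfl⟩

/-- A signed permutation matrix: exactly one nonzero entry, equal to `±1`,
in each row and each column. -/
def IsSignedPerm {n : ℕ} (P : Matrix (Fin n) (Fin n) ℤ) : Prop :=
  (∀ i j, P i j = 0 ∨ P i j = 1 ∨ P i j = -1) ∧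
  (∀ i, ∃! j, P i j ≠ 0) ∧ (∀ j, ∃! i, P i j ≠ 0)

/-- `𝒢(M)` is linearly symmetric: for every `i` there is a signed permutation matrix
inducing an automorphism of `𝒢(M)` sending `e₁` to `±e_i`. -/
def IsLinearlySymmetric {n : ℕ} (M : Matrix (Fin n) (Fin n) ℤ) : Prop :=
  ∀ i : Fin n, ∃ P : Matrix (Fin n) (Fin n) ℤ, IsSignedPerm P ∧
    (∃ Q : Matrix (Fin n) (Fin n) ℤ, P * M = M * Q) ∧
    (P.mulVec (stdBasis (⟨0, i.pos⟩ : Fin n)) = stdBasis i ∨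
      P.mulVec (stdBasis (⟨0, i.pos⟩ : Fin n)) = -stdBasis i)

/-- the lattice graphs of the two families of matrices are linearly symmetric
whenever the matrices are nonsingular. -/
theorem latticeGraph_of_families_linearlySymmetric (a b c : ℤ) :
    ((!![a, c, b; b, a, c; c, b, a] : Matrix (Fin 3) (Fin 3) ℤ).det ≠ 0 →
      IsLinearlySymmetric !![a, c, b; b, a, c; c, b, a]) ∧
    ((!![a, b, c; a, c, -b - c; a, -b - c, b] : Matrix (Fin 3) (Fin 3) ℤ).det ≠ 0 →
      IsLinearlySymmetric !![a, b, c; a, c, -b - c; a, -b - c, b]) := by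
  constructor <;> intro _ i <;> fin_cases i
  · exact ⟨!![1,0,0;0,1,0;0,0,1], by unfold IsSignedPerm ExistsUnique; simp only [Matrix.of_apply]; decide,
      ⟨!![1,0,0;0,1,0;0,0,1], by rw [Matrix.mul_fin_three, Matrix.mul_fin_three]; congr 2 <;> ring⟩,
      Or.inl (by decide)⟩
  · exact ⟨!![0,0,1;1,0,0;0,1,0], by unfold IsSignedPerm ExistsUnique; simp only [Matrix.of_apply]; decide,
      ⟨!![0,0,1;1,0,0;0,1,0], by rw [Matrix.mul_fin_three, Matrix.mul_fin_three]; congr 2 <;> ring⟩,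
      Or.inl (by decide)⟩
  · exact ⟨!![0,1,0;0,0,1;1,0,0], by unfold IsSignedPerm ExistsUnique; simp only [Matrix.of_apply]; decide,
      ⟨!![0,1,0;0,0,1;1,0,0], by rw [Matrix.mul_fin_three, Matrix.mul_fin_three]; congr 2 <;> ring⟩,
      Or.inl (by decide)⟩
  · exact ⟨!![1,0,0;0,1,0;0,0,1], by unfold IsSignedPerm ExistsUnique; simp only [Matrix.of_apply]; decide,
      ⟨!![1,0,0;0,1,0;0,0,1], by rw [Matrix.mul_fin_three, Matrix.mul_fin_three]; congr 2 <;> ring⟩,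
      Or.inl (by decide)⟩
  · exact ⟨!![0,0,1;1,0,0;0,1,0], by unfold IsSignedPerm ExistsUnique; simp only [Matrix.of_apply]; decide,
      ⟨!![1,0,0;0,-1,1;0,-1,0], by rw [Matrix.mul_fin_three, Matrix.mul_fin_three]; congr 2 <;> ring⟩,
      Or.inl (by decide)⟩
  · exact ⟨!![0,1,0;0,0,1;1,0,0], by unfold IsSignedPerm ExistsUnique; simp only [Matrix.of_apply]; decide,
      ⟨!![1,0,0;0,0,-1;0,1,-1], by rw [Matrix.mul_fin_three, Matrix.mul_fin_three]; congr 2 <;> ring⟩,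
      Or.inl (by decide)⟩
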